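/- Let d ∈ ℕ, c ≥ 0, m ∈ ℕ₀, and define ψ^l_{c,m}(x) := |x|^{-c/2-d/2} ∏_{j=1}^m (ln_j(|x|))^{-1/2} for |x| > e_m, and W_{c,m}(x) := (d(4-d)+c²+4c)/(4|x|²) + ((c+2)/(2|x|²)) Σ_{k=1}^m ∏_{j=1}^k (ln_j(|x|))^{-1} + (1/(4|x|²)) (Σ_{k=1}^m ∏_{j=1}^k (ln_j(|x|))^{-1})² + (1/(2|x|²)) Σ_{i=1}^m Σ_{j=1}^i ∏_{k=1}^i (ln_k(|x|))^{-1} ∏_{l=1}^j (ln_l(|x|))^{-1}. Then ψ^l_{c,m} is smooth on {x : |x| > e_m} and satisfies (-Δ + W_{c,m}) ψ^l_{c,m}(x) = 0 pointwise for all |x| > e_m. -/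

import Mathlib

open MeasureTheory Real Filter Finset
open scoped RealInnerProductSpace ENNReal Topology

/-- Iterated exponential: `iterExp 0 = 0`, `iterExp (n+1) = exp (iterExp n)`
(the `e_n` of the paper). -/
noncomputable def iterExp : ℕ → ℝ
  | 0 => 0
  | n + 1 => Real.exp (iterExp n)

/-- Iterated logarithm: `iterLog 1 r = log r`, `iterLog (n+1) r = log (iterLog n r)`
(the `ln_n` of the paper). -/
noncomputable def iterLog : ℕ → ℝ → ℝ
  | 0, r => r
  | n + 1, r => Real.log (iterLog n r)

/-- The Euclidean Laplacian `Δ f x = ∑ i, ∂²f/∂x_i² (x)`. -/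
noncomputable def lap {d : ℕ} (f : EuclideanSpace ℝ (Fin d) → ℝ)
    (x : EuclideanSpace ℝ (Fin d)) : ℝ :=
  ∑ i : Fin d, fderiv ℝ (fun y => fderiv ℝ f y (EuclideanSpace.single i 1)) x
    (EuclideanSpace.single i 1)

/-- `ψˡ_{c,m}(x) = |x|^{-c/2-d/2} ∏_{j=1}^m (ln_j |x|)^{-1/2}`. -/
noncomputable def psiL (d : ℕ) (c : ℝ) (m : ℕ) (x : EuclideanSpace ℝ (Fin d)) : ℝ :=
  ‖x‖ ^ (-(c / 2) - (d : ℝ) / 2) * ∏ j ∈ Finset.Icc 1 m, (iterLog j ‖x‖) ^ (-(1 : ℝ) / 2)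

/-- The potential `W_{c,m}` (as a function of `r = |x|`). -/
noncomputable def Wl (d : ℕ) (c : ℝ) (m : ℕ) (r : ℝ) : ℝ :=
  ((d : ℝ) * (4 - (d : ℝ)) + c ^ 2 + 4 * c) / (4 * r ^ 2)
    + ((c + 2) / (2 * r ^ 2)) * ∑ k ∈ Finset.Icc 1 m, ∏ j ∈ Finset.Icc 1 k, (iterLog j r)⁻¹
    + (1 / (4 * r ^ 2)) * (∑ k ∈ Finset.Icc 1 m, ∏ j ∈ Finset.Icc 1 k, (iterLog j r)⁻¹) ^ 2
    + (1 / (2 * r ^ 2)) * ∑ i ∈ Finset.Icc 1 m, ∑ j ∈ Finset.Icc 1 i,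
        (∏ k ∈ Finset.Icc 1 i, (iterLog k r)⁻¹) * ∏ l ∈ Finset.Icc 1 j, (iterLog l r)⁻¹

namespace PsiAux

lemma iterExp_nonneg (n : ℕ) : 0 ≤ iterExp n := by
  cases n with
  | zero => simp [iterExp]
  | succ n => exact (Real.exp_pos _).le

lemma iterLog_gt {m : ℕ} {r : ℝ} (hr : iterExp m < r) :
    ∀ j, j ≤ m → iterExp (m - j) < iterLog j r := by
  intro j
  induction j with
  | zero => intro _; simpa [iterLog] using hr
  | succ j ih =>
    intro hj
    have h1 : iterExp (m - j) < iterLog j r := ih (by omega)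
    have h2 : m - j = (m - (j+1)) + 1 := by omega
    have hpos : 0 < iterLog j r :=
      lt_of_le_of_lt (iterExp_nonneg _) h1
    show iterExp (m - (j+1)) < Real.log (iterLog j r)
    rw [Real.lt_log_iff_exp_lt hpos]
    calc Real.exp (iterExp (m - (j+1))) = iterExp (m - j) := by rw [h2]; rfl
      _ < iterLog j r := h1

lemma iterLog_pos {m j : ℕ} {r : ℝ} (hr : iterExp m < r) (hj : j ≤ m) :
    0 < iterLog j r :=
  lt_of_le_of_lt (iterExp_nonneg _) (iterLog_gt hr j hj)

lemma r_pos {m : ℕ} {r : ℝ} (hr : iterExp m < r) : 0 < r :=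
  lt_of_le_of_lt (iterExp_nonneg _) hr

lemma iterLog_hasDerivAt {m : ℕ} {r : ℝ} (hr : iterExp m < r) :
    ∀ j, j ≤ m → HasDerivAt (iterLog j) (∏ k ∈ Finset.range j, iterLog k r)⁻¹ r := by
  intro j
  induction j with
  | zero =>
    intro _
    simpa [iterLog] using (hasDerivAt_id' r)
  | succ j ih =>
    intro hj
    have h1 := ih (by omega)
    have hpos : iterLog j r ≠ 0 := (iterLog_pos hr (by omega)).ne'
    have := h1.log hpos
    convert this using 1
    · rfl
    rw [Finset.prod_range_succ, div_eq_mul_inv, mul_inv, mul_comm]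

/-- `∏_{j=1}^m f j = ∏_{j<m} f (j+1)` -/
lemma prod_Icc_one {M : Type*} [CommMonoid M] (f : ℕ → M) (m : ℕ) :
    ∏ j ∈ Finset.Icc 1 m, f j = ∏ j ∈ Finset.range m, f (j+1) := by
  induction m with
  | zero => simp
  | succ m ih => rw [Finset.prod_Icc_succ_top (by omega), ih, Finset.prod_range_succ]

noncomputable def P (k : ℕ) (r : ℝ) : ℝ := ∏ j ∈ Finset.Icc 1 k, (iterLog j r)⁻¹
noncomputable def S (m : ℕ) (r : ℝ) : ℝ := ∑ k ∈ Finset.Icc 1 m, P k r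
noncomputable def T (m : ℕ) (r : ℝ) : ℝ := ∑ i ∈ Finset.Icc 1 m, P i r * S i r

lemma inv_prod_range_succ {m j : ℕ} {r : ℝ} (hr : iterExp m < r) (hj : j ≤ m) :
    (∏ k ∈ Finset.range (j+1), iterLog k r)⁻¹ = r⁻¹ * P j r := by
  have hP : P j r = (∏ i ∈ Finset.range j, iterLog (i+1) r)⁻¹ := by
    rw [P, Finset.prod_inv_distrib, ← prod_Icc_one (fun k => iterLog k r) j]
  rw [Finset.prod_range_succ' (fun k => iterLog k r) j, mul_inv, hP]
  have h0 : iterLog 0 r = r := rfl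
  rw [h0, mul_comm]

lemma P_hasDerivAt {m : ℕ} {r : ℝ} (hr : iterExp m < r) :
    ∀ k, k ≤ m → HasDerivAt (P k) (-(P k r * S k r) / r) r := by
  intro k
  induction k with
  | zero =>
    intro _
    have h0 : P 0 = fun _ : ℝ => 1 := funext fun r => by simp [P]
    rw [h0]
    simpa [S] using (hasDerivAt_const r (1:ℝ))
  | succ k ih =>
    intro hk
    have hkm : k ≤ m := by omega
    have hL : iterLog (k+1) r ≠ 0 := (iterLog_pos hr hk).ne'
    have hr0 : r ≠ 0 := (r_pos hr).ne'
    have hP : P (k+1) = fun r => P k r * (iterLog (k+1) r)⁻¹ :=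
      funext fun r => Finset.prod_Icc_succ_top (by omega) _
    have hd := ((iterLog_hasDerivAt hr (k+1) hk).inv hL)
    have hprod := (ih hkm).mul hd
    rw [hP]
    convert hprod using 1
    · rfl
    · rfl
    · rfl
    rw [inv_prod_range_succ hr hkm]
    have hS : S (k+1) r = S k r + P k r * (iterLog (k+1) r)⁻¹ := by
      rw [S, Finset.sum_Icc_succ_top (by omega), hP]
      rfl
    simp only [hS]
    simp only [Pi.inv_apply]
    field_simp
    ring

lemma S_hasDerivAt {m : ℕ} {r : ℝ} (hr : iterExp m < r) :
    HasDerivAt (S m) (-(T m r) / r) r := by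
  have : HasDerivAt (fun r => ∑ k ∈ Finset.Icc 1 m, P k r)
      (∑ k ∈ Finset.Icc 1 m, -(P k r * S k r) / r) r :=
    HasDerivAt.fun_sum fun k hk => P_hasDerivAt hr k (Finset.mem_Icc.1 hk).2
  convert this using 1
  · rfl
  simp [T, neg_div, Finset.sum_div]

noncomputable def H (p : ℝ) (m : ℕ) (r : ℝ) : ℝ :=
  p * Real.log r - (1/2) * ∑ j ∈ Finset.Icc 1 m, Real.log (iterLog j r)

noncomputable def F (p : ℝ) (m : ℕ) (r : ℝ) : ℝ := Real.exp (H p m r)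

noncomputable def A (p : ℝ) (m : ℕ) (r : ℝ) : ℝ := (p - S m r / 2) / r
noncomputable def A2 (p : ℝ) (m : ℕ) (r : ℝ) : ℝ := (T m r / 2 - (p - S m r / 2)) / r ^ 2

noncomputable def F1 (p : ℝ) (m : ℕ) (r : ℝ) : ℝ := A p m r * F p m r
noncomputable def F2 (p : ℝ) (m : ℕ) (r : ℝ) : ℝ := (A2 p m r + A p m r ^ 2) * F p m r

lemma H_hasDerivAt {p : ℝ} {m : ℕ} {r : ℝ} (hr : iterExp m < r) :
    HasDerivAt (H p m) (A p m r) r := by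
  have hr0 : r ≠ 0 := (r_pos hr).ne'
  have hlog : HasDerivAt (fun r => p * Real.log r) (p * r⁻¹) r :=
    (Real.hasDerivAt_log hr0).const_mul p
  have hsum : HasDerivAt (fun r => ∑ j ∈ Finset.Icc 1 m, Real.log (iterLog j r))
      (∑ j ∈ Finset.Icc 1 m, r⁻¹ * P j r) r := by
    refine HasDerivAt.fun_sum fun j hj => ?_
    have hjm : j ≤ m := (Finset.mem_Icc.1 hj).2
    have hd := (iterLog_hasDerivAt hr j hjm).log (iterLog_pos hr hjm).ne'
    convert hd using 1
    · rfl
    · rfl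
    rw [div_eq_mul_inv, ← mul_inv, ← Finset.prod_range_succ,
      inv_prod_range_succ hr hjm]
  have := hlog.sub (hsum.const_mul (1/2 : ℝ))
  convert this using 1
  · rfl
  · rfl
  · rfl
  rw [A, S, ← Finset.mul_sum]
  field_simp

lemma F_hasDerivAt {p : ℝ} {m : ℕ} {r : ℝ} (hr : iterExp m < r) :
    HasDerivAt (F p m) (F1 p m r) r := by
  have := (H_hasDerivAt (p := p) hr).exp
  rw [F1, F, A]
  rw [mul_comm] at this
  exact this

lemma A_hasDerivAt {p : ℝ} {m : ℕ} {r : ℝ} (hr : iterExp m < r) :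
    HasDerivAt (A p m) (A2 p m r) r := by
  have hr0 : r ≠ 0 := (r_pos hr).ne'
  have hnum := (hasDerivAt_const r p).sub ((S_hasDerivAt hr).div_const 2)
  have := hnum.div (hasDerivAt_id r) hr0
  convert this using 1
  · rfl
  · rfl
  · rfl
  rw [A2]
  simp only [id, Pi.sub_apply]
  field_simp
  ring

lemma F1_hasDerivAt {p : ℝ} {m : ℕ} {r : ℝ} (hr : iterExp m < r) :
    HasDerivAt (F1 p m) (F2 p m r) r := by
  have := (A_hasDerivAt (p := p) hr).mul (F_hasDerivAt (p := p) hr)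
  convert this using 1
  · rfl
  · rfl
  · rfl
  rw [F2, F1]
  ring

noncomputable def G (p : ℝ) (m : ℕ) (t : ℝ) : ℝ := F p m (Real.sqrt t)
noncomputable def G1 (p : ℝ) (m : ℕ) (t : ℝ) : ℝ := F1 p m (Real.sqrt t) * (2 * Real.sqrt t)⁻¹
noncomputable def G2 (p : ℝ) (m : ℕ) (t : ℝ) : ℝ :=
  (F2 p m (Real.sqrt t) - F1 p m (Real.sqrt t) / Real.sqrt t) / (4 * t)

lemma sqrt_pos_of_gt {m : ℕ} {t : ℝ} (hr : iterExp m < Real.sqrt t) : 0 < t :=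
  Real.sqrt_pos.1 (lt_of_le_of_lt (iterExp_nonneg m) hr)

lemma G_hasDerivAt {p : ℝ} {m : ℕ} {t : ℝ} (hr : iterExp m < Real.sqrt t) :
    HasDerivAt (G p m) (G1 p m t) t := by
  have ht : 0 < t := sqrt_pos_of_gt hr
  have hs := Real.hasDerivAt_sqrt ht.ne'
  have := (F_hasDerivAt (p := p) hr).comp t hs
  convert this using 1
  · rfl
  · rfl
  · rfl
  rw [G1, one_div, mul_comm 2 (Real.sqrt t)]

lemma G1_hasDerivAt {p : ℝ} {m : ℕ} {t : ℝ} (hr : iterExp m < Real.sqrt t) :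
    HasDerivAt (G1 p m) (G2 p m t) t := by
  have ht : 0 < t := sqrt_pos_of_gt hr
  have hs0 : Real.sqrt t ≠ 0 := (Real.sqrt_pos.2 ht).ne'
  have hs := Real.hasDerivAt_sqrt ht.ne'
  have hF1 := (F1_hasDerivAt (p := p) hr).comp t hs
  have h2s0 : 2 * Real.sqrt t ≠ 0 := by positivity
  have hinv := ((hs.const_mul (2:ℝ)).inv h2s0)
  have hmul := hF1.mul hinv
  convert hmul using 1
  · rfl
  · rfl
  · rfl
  have hss : Real.sqrt t * Real.sqrt t = t := Real.mul_self_sqrt ht.le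
  simp only [Pi.inv_apply, Function.comp_apply]
  rw [G2, ← hss]
  set s := Real.sqrt t with hsdef
  simp only [Real.sqrt_mul_self (show 0 ≤ s from Real.sqrt_nonneg t)]
  field_simp
  ring

lemma Wl_eq (d : ℕ) (c : ℝ) (m : ℕ) (r : ℝ) : Wl d c m r =
    ((d : ℝ) * (4 - (d : ℝ)) + c ^ 2 + 4 * c) / (4 * r ^ 2)
      + ((c + 2) / (2 * r ^ 2)) * S m r + (1 / (4 * r ^ 2)) * (S m r) ^ 2
      + (1 / (2 * r ^ 2)) * T m r := by
  simp only [Wl, S, T, P, Finset.mul_sum]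

lemma key_alg (d : ℕ) (c : ℝ) {m : ℕ} {r p : ℝ} (hr0 : r ≠ 0)
    (hp : p = -(c/2) - (d:ℝ)/2) :
    A2 p m r + A p m r ^ 2 + ((d:ℝ) - 1) * A p m r / r = Wl d c m r := by
  subst hp
  rw [Wl_eq, A, A2]
  field_simp
  ring

lemma F_eq {m : ℕ} {r : ℝ} (hr : iterExp m < r) (p : ℝ) :
    r ^ p * ∏ j ∈ Finset.Icc 1 m, (iterLog j r) ^ (-(1:ℝ)/2) = F p m r := by
  rw [F, H, sub_eq_add_neg, Real.exp_add]
  congr 1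
  · rw [Real.rpow_def_of_pos (r_pos hr), mul_comm]
  · rw [show -(1/2 * ∑ j ∈ Finset.Icc 1 m, Real.log (iterLog j r)) =
      ∑ j ∈ Finset.Icc 1 m, Real.log (iterLog j r) * (-(1:ℝ)/2) by
        rw [← Finset.sum_mul]; ring]
    rw [Real.exp_sum]
    refine Finset.prod_congr rfl fun j hj => ?_
    rw [Real.rpow_def_of_pos (iterLog_pos hr (Finset.mem_Icc.1 hj).2)]

lemma iterLog_contDiffAt {m : ℕ} {r : ℝ} (hr : iterExp m < r) :
    ∀ j, j ≤ m → ContDiffAt ℝ (⊤:ℕ∞) (iterLog j) r := by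
  intro j
  induction j with
  | zero =>
    intro _
    have : iterLog 0 = fun r : ℝ => r := funext fun _ => rfl
    rw [this]
    exact contDiffAt_id
  | succ j ih =>
    intro hj
    exact (ih (by omega)).log (iterLog_pos hr (by omega)).ne'

lemma F_contDiffAt {p : ℝ} {m : ℕ} {r : ℝ} (hr : iterExp m < r) :
    ContDiffAt ℝ (⊤:ℕ∞) (F p m) r := by
  have hr0 : r ≠ 0 := (r_pos hr).ne'
  have hH : ContDiffAt ℝ (⊤:ℕ∞) (H p m) r := by
    refine ContDiffAt.sub (contDiffAt_const.mul (Real.contDiffAt_log.2 hr0)) ?_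
    refine ContDiffAt.mul contDiffAt_const ?_
    exact ContDiffAt.sum fun j hj =>
      (iterLog_contDiffAt hr j (Finset.mem_Icc.1 hj).2).log
        (iterLog_pos hr (Finset.mem_Icc.1 hj).2).ne'
  exact Real.contDiff_exp.contDiffAt.comp r hH

lemma G_contDiffAt {p : ℝ} {m : ℕ} {t : ℝ} (hr : iterExp m < Real.sqrt t) :
    ContDiffAt ℝ (⊤:ℕ∞) (G p m) t := by
  have ht : 0 < t := sqrt_pos_of_gt hr
  exact (F_contDiffAt (p := p) hr).comp t (contDiffAt_sqrt ht.ne')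

end PsiAux

/-- `ψˡ_{c,m}` is smooth on `{|x| > e_m}` and satisfies
`(-Δ + W_{c,m}) ψˡ_{c,m} = 0` pointwise there. -/
theorem psiL_zero_energy (d : ℕ) (hd : 0 < d) (c : ℝ) (hc : 0 ≤ c) (m : ℕ) :
    ContDiffOn ℝ (⊤ : ℕ∞) (psiL d c m) {x : EuclideanSpace ℝ (Fin d) | iterExp m < ‖x‖} ∧
    ∀ x : EuclideanSpace ℝ (Fin d), iterExp m < ‖x‖ →
      -lap (psiL d c m) x + Wl d c m ‖x‖ * psiL d c m x = 0 := by
  classical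
  have hp : (-(c / 2) - (d : ℝ) / 2) = -(c/2) - (d:ℝ)/2 := rfl
  set U : Set (EuclideanSpace ℝ (Fin d)) := {x | iterExp m < ‖x‖} with hUdef
  have hU : IsOpen U := isOpen_lt continuous_const continuous_norm
  have hsq : ∀ y : EuclideanSpace ℝ (Fin d), Real.sqrt (‖y‖^2) = ‖y‖ :=
    fun y => Real.sqrt_sq (norm_nonneg y)
  have hpsi_eq : ∀ y ∈ U, psiL d c m y = PsiAux.G (-(c / 2) - (d : ℝ) / 2) m (‖y‖^2) := by
    intro y hy
    rw [psiL, PsiAux.G, hsq y]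
    exact PsiAux.F_eq hy _
  constructor
  · intro x hx
    have hcda : ContDiffAt ℝ (⊤:ℕ∞)
        (fun y : EuclideanSpace ℝ (Fin d) => PsiAux.G (-(c / 2) - (d : ℝ) / 2) m (‖y‖^2)) x := by
      refine (PsiAux.G_contDiffAt (by rw [hsq x]; exact hx)).comp x ?_
      exact (contDiff_norm_sq ℝ).contDiffAt
    refine (hcda.congr_of_eventuallyEq ?_).contDiffWithinAt
    exact Filter.eventuallyEq_of_mem (hU.mem_nhds hx) hpsi_eq
  · intro x hx
    have hx' : x ∈ U := hx
    have hr0 : ‖x‖ ≠ 0 := (PsiAux.r_pos hx).ne'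
    -- the gradient on U
    have hfd : ∀ y ∈ U, fderiv ℝ (psiL d c m) y
        = PsiAux.G1 (-(c / 2) - (d : ℝ) / 2) m (‖y‖^2) • ((2:ℕ) • (innerSL ℝ y)) := by
      intro y hy
      have hev : psiL d c m =ᶠ[𝓝 y]
          (fun z => PsiAux.G (-(c / 2) - (d : ℝ) / 2) m (‖z‖^2)) :=
        Filter.eventuallyEq_of_mem (hU.mem_nhds hy) hpsi_eq
      rw [hev.fderiv_eq]
      have hG := (PsiAux.G_hasDerivAt (p := -(c / 2) - (d : ℝ) / 2)
        (by rw [hsq y]; exact hy)).comp_hasFDerivAt y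
        (hasStrictFDerivAt_norm_sq y).hasFDerivAt
      exact hG.fderiv
    -- the second derivatives
    have hsum : ∀ i : Fin d,
        fderiv ℝ (fun y => fderiv ℝ (psiL d c m) y (EuclideanSpace.single i 1)) x
          (EuclideanSpace.single i 1)
        = 2 * PsiAux.G1 (-(c / 2) - (d : ℝ) / 2) m (‖x‖^2)
          + 4 * x i ^ 2 * PsiAux.G2 (-(c / 2) - (d : ℝ) / 2) m (‖x‖^2) := by
      intro i
      have hev : (fun y => fderiv ℝ (psiL d c m) y (EuclideanSpace.single i 1)) =ᶠ[𝓝 x]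
          (fun y => PsiAux.G1 (-(c / 2) - (d : ℝ) / 2) m (‖y‖^2) * (2 * y i)) := by
        refine Filter.eventuallyEq_of_mem (hU.mem_nhds hx') fun y hy => ?_
        rw [hfd y hy]
        simp [EuclideanSpace.inner_single_right]
      rw [hev.fderiv_eq]
      have h1 : HasFDerivAt
          (fun y : EuclideanSpace ℝ (Fin d) => PsiAux.G1 (-(c / 2) - (d : ℝ) / 2) m (‖y‖^2))
          (PsiAux.G2 (-(c / 2) - (d : ℝ) / 2) m (‖x‖^2) • ((2:ℕ) • (innerSL ℝ x))) x :=
        (PsiAux.G1_hasDerivAt (p := -(c / 2) - (d : ℝ) / 2)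
          (by rw [hsq x]; exact hx)).comp_hasFDerivAt x
          (hasStrictFDerivAt_norm_sq x).hasFDerivAt
      have h2 : HasFDerivAt (fun y : EuclideanSpace ℝ (Fin d) => 2 * y i)
          ((2:ℝ) • (EuclideanSpace.proj i : EuclideanSpace ℝ (Fin d) →L[ℝ] ℝ)) x := by
        have := ((EuclideanSpace.proj i : EuclideanSpace ℝ (Fin d) →L[ℝ] ℝ)).hasFDerivAt
          (x := x) |>.const_mul (2:ℝ)
        simpa [PiLp.proj_apply] using this
      have hmul := h1.fun_mul h2
      rw [hmul.fderiv]
      simp [EuclideanSpace.inner_single_right, EuclideanSpace.single_apply,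
        PiLp.proj_apply]
      ring
    have hxx : ∑ i, x i ^ 2 = ‖x‖^2 := by
      rw [← real_inner_self_eq_norm_sq]
      rw [real_inner_self_eq_norm_sq, EuclideanSpace.real_norm_sq_eq]
    have hlap : lap (psiL d c m) x
        = 2 * (d:ℝ) * PsiAux.G1 (-(c / 2) - (d : ℝ) / 2) m (‖x‖^2)
          + 4 * (‖x‖^2) * PsiAux.G2 (-(c / 2) - (d : ℝ) / 2) m (‖x‖^2) := by
      rw [lap, Finset.sum_congr rfl (fun i _ => hsum i), Finset.sum_add_distrib,
        Finset.sum_const, Finset.card_univ, Fintype.card_fin, nsmul_eq_mul]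
      rw [show ∀ G2c : ℝ, ∑ i, 4 * x i ^ 2 * G2c = 4 * (∑ i, x i ^ 2) * G2c from
        fun G2c => by rw [← Finset.sum_mul, ← Finset.mul_sum]]
      rw [hxx]
      ring
    have hval : psiL d c m x = PsiAux.F (-(c / 2) - (d : ℝ) / 2) m ‖x‖ := by
      rw [hpsi_eq x hx', PsiAux.G, hsq x]
    have hG1 : PsiAux.G1 (-(c / 2) - (d : ℝ) / 2) m (‖x‖^2)
        = PsiAux.F1 (-(c / 2) - (d : ℝ) / 2) m ‖x‖ * (2 * ‖x‖)⁻¹ := by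
      rw [PsiAux.G1, hsq x]
    have hG2 : PsiAux.G2 (-(c / 2) - (d : ℝ) / 2) m (‖x‖^2)
        = (PsiAux.F2 (-(c / 2) - (d : ℝ) / 2) m ‖x‖
            - PsiAux.F1 (-(c / 2) - (d : ℝ) / 2) m ‖x‖ / ‖x‖) / (4 * ‖x‖^2) := by
      rw [PsiAux.G2, hsq x]
    rw [hlap, hval, hG1, hG2,
      ← PsiAux.key_alg d c (m := m) hr0 rfl,
      PsiAux.F1, PsiAux.F2]
    field_simp
    ring
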